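/- For every n ≥ 1, in the POMDP P_n (defined in the context) with safety objective Safe(L ∖ {Bad}), every finite-memory randomized observation-based strategy that is positive winning from the initial state q_0 has memory of size at least p*_n = p_1·p_2⋯p_n; in particular its memory size is at least 2^n, while P_n has 2 + (p_1 + … + p_n) states, a number polynomial in n. -/

import Mathlib

open scoped ENNReal

/-- A partially-observable Markov decision process (POMDP) with states `L`,
actions `A` and observations `O`: a probabilistic transition function and an
observation function (the observations partition the state space). -/
structure POMDP (L : Type) (A : Type) (O : Type) where
  δ : L → A → PMF L
  obs : L → O

namespace POMDP

variable {L A O : Type}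

/-- A (randomized) strategy: given the initial state and the history of
(action, state) steps played so far, it chooses a distribution on actions. -/
abbrev Strategy (L A : Type) := L → List (A × L) → PMF A

/-- The sequence of states visited along a finite prefix. -/
def statesOf (l : L) (h : List (A × L)) : List L := l :: h.map Prod.snd

/-- Auxiliary probability of a finite prefix, for a strategy `π` given as a
function of the remaining history. -/
noncomputable def prefProbAux (M : POMDP L A O) :
    (List (A × L) → PMF A) → L → List (A × L) → ℝ≥0∞
  | _, _, [] => 1
  | π, l, (a, l') :: h =>
      π [] a * M.δ l a l' * M.prefProbAux (fun h' => π ((a, l') :: h')) l' h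

/-- The probability, under strategy `α` from state `l`, that the play starts
with the finite prefix `h` of (action, state) steps. -/
noncomputable def prefProb (M : POMDP L A O) (α : Strategy L A) (l : L)
    (h : List (A × L)) : ℝ≥0∞ :=
  M.prefProbAux (α l) l h

/-- A prefix is consistent with `α` from `l` if it has positive probability. -/
def Consistent (M : POMDP L A O) (α : Strategy L A) (l : L) (h : List (A × L)) : Prop :=
  0 < M.prefProb α l h

/-- The probability, under strategy `α` from state `l`, that the length-`n`
prefix of the play satisfies the predicate `P`. -/
noncomputable def horizonProb (M : POMDP L A O) [Fintype L] [Fintype A]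
    (α : Strategy L A) (l : L) (n : ℕ) (P : List (A × L) → Prop) : ℝ≥0∞ :=
  ∑ f : Fin n → A × L,
    Set.indicator {g : Fin n → A × L | P (List.ofFn g)}
      (fun g => M.prefProb α l (List.ofFn g)) f

/-- `Pr_l^α(Reach(T))`: probability that the play visits a state of `T`
(as the increasing limit of the finite-horizon reachability probabilities). -/
noncomputable def reachProb (M : POMDP L A O) [Fintype L] [Fintype A]
    (α : Strategy L A) (l : L) (T : Set L) : ℝ≥0∞ :=
  ⨆ n, M.horizonProb α l n (fun h => ∃ s ∈ statesOf l h, s ∈ T)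

/-- `Pr_l^α(Safe(T))`: probability that all states of the play lie in `T`
(as the decreasing limit of the finite-horizon safety probabilities). -/
noncomputable def safeProb (M : POMDP L A O) [Fintype L] [Fintype A]
    (α : Strategy L A) (l : L) (T : Set L) : ℝ≥0∞ :=
  ⨅ n, M.horizonProb α l n (fun h => ∀ s ∈ statesOf l h, s ∈ T)

/-- `Pr_l^α(Until(T₁,T₂))`: probability that the play visits `T₂` at some
position `k` with all positions `≤ k` in `T₁`. -/
noncomputable def untilProb (M : POMDP L A O) [Fintype L] [Fintype A]
    (α : Strategy L A) (l : L) (T₁ T₂ : Set L) : ℝ≥0∞ :=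
  ⨆ n, M.horizonProb α l n (fun h => ∃ k, ∃ hk : k < (statesOf l h).length,
      (statesOf l h).get ⟨k, hk⟩ ∈ T₂ ∧
      ∀ j, ∀ hj : j < (statesOf l h).length, j ≤ k → (statesOf l h).get ⟨j, hj⟩ ∈ T₁)

/-- `Pr_l^α(coBüchi(T))`: probability that from some point on all states of
the play lie in `T`. -/
noncomputable def coBuchiProb (M : POMDP L A O) [Fintype L] [Fintype A]
    (α : Strategy L A) (l : L) (T : Set L) : ℝ≥0∞ :=
  ⨆ k, ⨅ n, M.horizonProb α l n (fun h =>
    ∀ j, ∀ hj : j < (statesOf l h).length, k ≤ j → (statesOf l h).get ⟨j, hj⟩ ∈ T)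

/-- `Pr_l^α(Büchi(T))`: probability that the play visits `T` infinitely often. -/
noncomputable def buchiProb (M : POMDP L A O) [Fintype L] [Fintype A]
    (α : Strategy L A) (l : L) (T : Set L) : ℝ≥0∞ :=
  ⨅ k, ⨆ n, M.horizonProb α l n (fun h =>
    ∃ j, ∃ hj : j < (statesOf l h).length, k ≤ j ∧ (statesOf l h).get ⟨j, hj⟩ ∈ T)

/-- A strategy is observation-based if it plays the same distribution after any
two prefixes with the same sequences of observations and of actions. -/
def ObservationBased (M : POMDP L A O) (α : Strategy L A) : Prop :=
  ∀ l l' (h h' : List (A × L)), M.obs l = M.obs l' →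
    h.map Prod.fst = h'.map Prod.fst →
    h.map (fun p => M.obs p.2) = h'.map (fun p => M.obs p.2) →
    α l h = α l' h'

/-- A strategy is pure if it always plays a Dirac distribution. -/
def PureStrategy (α : Strategy L A) : Prop := ∀ l h, ∃ a, α l h = PMF.pure a

/-- Edge of the underlying graph of the POMDP. -/
def Edge (M : POMDP L A O) (l l' : L) : Prop := ∃ a, 0 < M.δ l a l'

/-- Reachability in the underlying graph of the POMDP. -/
def ReachableFrom (M : POMDP L A O) (l l' : L) : Prop :=
  Relation.ReflTransGen M.Edge l l'

/-- The memory state reached by a memory-update function `u` (together with the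
current state) after running through a prefix. -/
def memRun (M : POMDP L A O) {Mem : Type} (u : Mem → O → A → Mem) :
    Mem → L → List (A × L) → Mem × L
  | m, l, [] => (m, l)
  | m, l, (a, l') :: h => M.memRun u (u m (M.obs l) a) l' h

/-- The (observation-based) strategy induced by a finite-memory machine given by
memory-update function `u`, next-action function `next` and initial memory `m0`. -/
def fmStrategy (M : POMDP L A O) {Mem : Type} (u : Mem → O → A → Mem)
    (next : Mem → O → PMF A) (m0 : Mem) : Strategy L A :=
  fun l h =>
    let p := M.memRun u m0 l h
    next p.1 (M.obs p.2)

/-- The distribution choosing `x` and `y` with probability 1/2 each. -/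
noncomputable def half (x y : L) : PMF L :=
  (PMF.uniformOfFintype Bool).map (fun b => if b then x else y)

end POMDP

/-- The state space of the POMDP `P_n`: for each `1 ≤ i ≤ n` a loop of `p_i`
states `q_1^i, …, q_{p_i}^i` where `p_i` is the `i`-th prime number (encoded as
`Sum.inl ⟨i, j⟩` with `j : Fin p_i` standing for `q_{j+1}^i`), together with the
initial state `q_0 = Sum.inr 0` and the absorbing state `Bad = Sum.inr 1`. -/
abbrev PnState (n : ℕ) : Type :=
  (Σ i : Fin n, Fin (Nat.nth Nat.Prime i.val)) ⊕ Fin 2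

/-- The actions of `P_n`: `some i` is the action `i+1 ∈ Σ_n = {1,…,n}` and
`none` is the action `#`. -/
abbrev PnAction (n : ℕ) : Type := Option (Fin n)

/-- `p*_n = p_1 ⋯ p_n`, the product of the first `n` primes. -/
noncomputable def pstar (n : ℕ) : ℕ := ∏ i : Fin n, Nat.nth Nat.Prime i.val

/-- The POMDP `P_n`. From `q_0`, every action in `Σ_n` goes to `q_1^i` with
probability `1/n` for each `i`, and `#` goes to `Bad`. From `q_j^i` with
`j < p_i`, every action in `Σ_n` goes to `q_{j+1}^i` and to `q_0` with
probability `1/2` each, and `#` goes to `Bad`. From `q_{p_i}^i`, every action in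
`Σ_n ∖ {i}` goes to `q_1^i` and to `q_0` with probability `1/2` each, the action
`i` goes to `Bad`, and `#` goes to `q_0`. `Bad` is absorbing. Observations:
`o_1 = {q_0}` (observation `0`), `o_2` = the loop states (observation `1`), and
`{Bad}` (observation `2`). -/
noncomputable def PnM (n : ℕ) [NeZero n] : POMDP (PnState n) (PnAction n) (Fin 3) where
  δ := fun s act =>
    match s with
    | Sum.inr k =>
        if k = 0 then
          match act with
          | some _ => (PMF.uniformOfFintype (Fin n)).map
              (fun i => Sum.inl ⟨i, ⟨0, (Nat.prime_nth_prime i.val).pos⟩⟩)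
          | none => PMF.pure (Sum.inr 1)
        else PMF.pure (Sum.inr 1)
    | Sum.inl ⟨i, j⟩ =>
        if hlt : j.val + 1 < Nat.nth Nat.Prime i.val then
          match act with
          | some _ => POMDP.half (Sum.inl ⟨i, ⟨j.val + 1, hlt⟩⟩) (Sum.inr 0)
          | none => PMF.pure (Sum.inr 1)
        else
          match act with
          | some k =>
              if k = i then PMF.pure (Sum.inr 1)
              else POMDP.half (Sum.inl ⟨i, ⟨0, (Nat.prime_nth_prime i.val).pos⟩⟩)
                     (Sum.inr 0)
          | none => PMF.pure (Sum.inr 0)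
  obs := fun s =>
    match s with
    | Sum.inr k => if k = 0 then 0 else 2
    | Sum.inl _ => 1
section Aux

lemma two_le_nth_prime (i : ℕ) : 2 ≤ Nat.nth Nat.Prime i :=
  (Nat.prime_nth_prime i).two_le

lemma two_pow_le_pstar (n : ℕ) : 2 ^ n ≤ pstar n := by
  have : (2:ℕ) ^ n = ∏ _i : Fin n, 2 := by simp
  rw [this, pstar]
  exact Finset.prod_le_prod' (fun i _ => two_le_nth_prime i.val)

lemma pstar_pos (n : ℕ) : 0 < pstar n :=
  lt_of_lt_of_le (by positivity) (two_pow_le_pstar n)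

lemma card_PnState (n : ℕ) :
    Fintype.card (PnState n) = 2 + ∑ i : Fin n, Nat.nth Nat.Prime i.val := by
  simp [Fintype.card_sum, Fintype.card_sigma, add_comm]

lemma nth_dvd_pstar {n : ℕ} (i : Fin n) : Nat.nth Nat.Prime i.val ∣ pstar n := by
  exact Finset.dvd_prod_of_mem _ (Finset.mem_univ i)

lemma pstar_dvd {n : ℕ} (m : ℕ)
    (h : ∀ i : Fin n, Nat.nth Nat.Prime i.val ∣ m) : pstar n ∣ m := by
  have hinj : ∀ a ∈ Finset.univ, ∀ b ∈ Finset.univ,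
      (fun i : Fin n => Nat.nth Nat.Prime i.val) a =
      (fun i : Fin n => Nat.nth Nat.Prime i.val) b → a = b := by
    intro a _ b _ hab
    exact Fin.val_injective (Nat.nth_injective Nat.infinite_setOf_prime hab)
  have himg : pstar n = ∏ p ∈ Finset.univ.image
      (fun i : Fin n => Nat.nth Nat.Prime i.val), p := by
    rw [Finset.prod_image hinj]; rfl
  rw [himg]
  refine Finset.prod_primes_dvd _ ?_ ?_
  · intro a ha
    simp only [Finset.mem_image] at ha
    obtain ⟨i, _, rfl⟩ := ha
    exact (Nat.prime_nth_prime i.val).prime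
  · intro a ha
    simp only [Finset.mem_image] at ha
    obtain ⟨i, _, rfl⟩ := ha
    exact h i

/-- If `k < pstar n - 1` then some prime index is not at the top. -/
lemma exists_nontop {n : ℕ} {k : ℕ} (hk : k < pstar n - 1) :
    ∃ i : Fin n, k % Nat.nth Nat.Prime i.val ≠ Nat.nth Nat.Prime i.val - 1 := by
  by_contra h
  push_neg at h
  have hdvd : pstar n ∣ k + 1 := by
    refine pstar_dvd _ (fun i => ?_)
    have h2 := two_le_nth_prime i.val
    have hm := h i
    have hlt : k % Nat.nth Nat.Prime i.val < Nat.nth Nat.Prime i.val :=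
      Nat.mod_lt _ (by omega)
    refine Nat.dvd_of_mod_eq_zero ?_
    rw [Nat.add_mod, hm, Nat.mod_eq_of_lt (a := 1) (by omega)]
    have : Nat.nth Nat.Prime i.val - 1 + 1 = Nat.nth Nat.Prime i.val := by omega
    rw [this, Nat.mod_self]
  have := Nat.le_of_dvd (Nat.succ_pos k) hdvd
  have := pstar_pos n
  omega

lemma pstar_sub_one_mod {n : ℕ} (i : Fin n) :
    (pstar n - 1) % Nat.nth Nat.Prime i.val = Nat.nth Nat.Prime i.val - 1 := by
  obtain ⟨t, ht⟩ := nth_dvd_pstar i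
  have h2 := two_le_nth_prime i.val
  have hpos := pstar_pos n
  have ht1 : 1 ≤ t := by
    rcases Nat.eq_zero_or_pos t with h | h
    · rw [h, Nat.mul_zero] at ht; omega
    · exact h
  have hmul : Nat.nth Nat.Prime i.val * t =
      Nat.nth Nat.Prime i.val * (t-1) + Nat.nth Nat.Prime i.val := by
    rw [Nat.mul_sub, Nat.mul_one]
    have : Nat.nth Nat.Prime i.val ≤ Nat.nth Nat.Prime i.val * t :=
      Nat.le_mul_of_pos_right _ ht1
    omega
  have hrw : pstar n - 1 = (Nat.nth Nat.Prime i.val - 1) +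
      Nat.nth Nat.Prime i.val * (t - 1) := by omega
  rw [hrw, Nat.add_mul_mod_self_left, Nat.mod_eq_of_lt (by omega)]

end Aux
section Chain

lemma sum_pmf_eq_one {X : Type} [Fintype X] (p : PMF X) : ∑ x : X, p x = 1 := by
  rw [← tsum_fintype (L := .unconditional _)]; exact p.tsum_coe

lemma sum_fn_succ {X M : Type} [Fintype X] [AddCommMonoid M] {N : ℕ}
    (F : (Fin (N+1) → X) → M) :
    ∑ f : Fin (N+1) → X, F f = ∑ x : X, ∑ g : Fin N → X, F (Fin.cons x g) := by
  have h1 : ∑ f : Fin (N+1) → X, F f = ∑ p : X × (Fin N → X), F (Fin.cons p.1 p.2) :=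
    (Fintype.sum_equiv (Fin.consEquiv fun _ => X) _ _ (fun p => rfl)).symm
  rw [h1, Fintype.sum_prod_type]

variable {n : ℕ} [NeZero n] {Mem : Type}
variable (u : Mem → Fin 3 → PnAction n → Mem) (next : Mem → Fin 3 → PMF (PnAction n))

/-- Finite-horizon safety value of the chain, parameterized by current memory
and state. -/
noncomputable def qsafe (N : ℕ) (m : Mem) (l : PnState n) : ℝ≥0∞ :=
  (PnM n).horizonProb ((PnM n).fmStrategy u next m) l N
    (fun h => ∀ s ∈ POMDP.statesOf l h, s ∈ ({(Sum.inr 1 : PnState n)}ᶜ : Set (PnState n)))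

lemma statesOf_cons {L A : Type} (l l' : L) (a : A) (t : List (A × L)) :
    POMDP.statesOf l ((a, l') :: t) = l :: POMDP.statesOf l' t := rfl

lemma prefProb_cons (m : Mem) (a : PnAction n) (l l' : PnState n)
    (t : List (PnAction n × PnState n)) :
    (PnM n).prefProb ((PnM n).fmStrategy u next m) l ((a, l') :: t)
      = next m ((PnM n).obs l) a * (PnM n).δ l a l' *
        (PnM n).prefProb ((PnM n).fmStrategy u next (u m ((PnM n).obs l) a)) l' t := rfl

lemma qsafe_zero (m : Mem) (l : PnState n) :
    qsafe u next 0 m l = if l = Sum.inr 1 then 0 else 1 := by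
  classical
  rw [qsafe, POMDP.horizonProb, Fintype.sum_unique]
  simp only [Set.indicator_apply, Set.mem_setOf_eq, List.ofFn_zero, POMDP.statesOf,
    List.map_nil, List.forall_mem_cons, List.not_mem_nil, false_implies, implies_true,
    and_true, Set.mem_compl_iff, Set.mem_singleton_iff]
  by_cases h : l = Sum.inr 1 <;>
    simp [h, POMDP.prefProb, POMDP.prefProbAux]

lemma qsafe_succ (N : ℕ) (m : Mem) (l : PnState n) :
    qsafe u next (N+1) m l
      = (if l = Sum.inr 1 then 0 else 1) *
        ∑ a : PnAction n, ∑ l' : PnState n,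
          next m ((PnM n).obs l) a * (PnM n).δ l a l' *
            qsafe u next N (u m ((PnM n).obs l) a) l' := by
  classical
  rw [qsafe, POMDP.horizonProb, sum_fn_succ, Fintype.sum_prod_type]
  by_cases hl : l = Sum.inr 1
  · subst hl
    rw [if_pos rfl, zero_mul]
    refine Finset.sum_eq_zero (fun a _ => Finset.sum_eq_zero (fun l' _ =>
      Finset.sum_eq_zero (fun g _ => ?_)))
    refine Set.indicator_of_notMem ?_ _
    intro hmem
    simp only [Set.mem_setOf_eq] at hmem
    have h2 : (Sum.inr 1 : PnState n) ∈ POMDP.statesOf (Sum.inr 1) (List.ofFn (Fin.cons (a, l') g)) :=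
      List.mem_cons_self
    exact (hmem _ h2) rfl
  · rw [if_neg hl, one_mul]
    refine Finset.sum_congr rfl (fun a _ => Finset.sum_congr rfl (fun l' _ => ?_))
    rw [qsafe, POMDP.horizonProb, Finset.mul_sum]
    refine Finset.sum_congr rfl (fun g _ => ?_)
    have hofn : List.ofFn (Fin.cons (a, l') g) = (a, l') :: List.ofFn g := by
      simp [List.ofFn_succ]
    rcases Classical.em (∀ s ∈ POMDP.statesOf l' (List.ofFn g),
        s ∈ ({(Sum.inr 1 : PnState n)}ᶜ : Set (PnState n))) with hQ | hQ
    · have hmem : Fin.cons (a, l') g ∈ {g0 : Fin (N+1) → PnAction n × PnState n |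
          ∀ s ∈ POMDP.statesOf l (List.ofFn g0),
            s ∈ ({(Sum.inr 1 : PnState n)}ᶜ : Set (PnState n))} := by
        simp only [Set.mem_setOf_eq, hofn, statesOf_cons, List.forall_mem_cons]
        exact ⟨by simpa using hl, hQ⟩
      have hQ' : g ∈ {g0 : Fin N → PnAction n × PnState n |
          ∀ s ∈ POMDP.statesOf l' (List.ofFn g0),
            s ∈ ({(Sum.inr 1 : PnState n)}ᶜ : Set (PnState n))} := hQ
      rw [Set.indicator_of_mem hmem, Set.indicator_of_mem hQ', hofn, prefProb_cons]
    · have hmem : Fin.cons (a, l') g ∉ {g0 : Fin (N+1) → PnAction n × PnState n |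
          ∀ s ∈ POMDP.statesOf l (List.ofFn g0),
            s ∈ ({(Sum.inr 1 : PnState n)}ᶜ : Set (PnState n))} := by
        simp only [Set.mem_setOf_eq, hofn, statesOf_cons, List.forall_mem_cons]
        exact fun h => hQ h.2
      have hQ' : g ∉ {g0 : Fin N → PnAction n × PnState n |
          ∀ s ∈ POMDP.statesOf l' (List.ofFn g0),
            s ∈ ({(Sum.inr 1 : PnState n)}ᶜ : Set (PnState n))} := hQ
      rw [Set.indicator_of_notMem hmem, Set.indicator_of_notMem hQ', mul_zero]

lemma qsafe_le_one (N : ℕ) (m : Mem) (l : PnState n) :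
    qsafe u next N m l ≤ 1 := by
  induction N generalizing m l with
  | zero => rw [qsafe_zero]; split <;> simp
  | succ N ih =>
    rw [qsafe_succ]
    calc (if l = Sum.inr 1 then (0:ℝ≥0∞) else 1) *
        ∑ a : PnAction n, ∑ l' : PnState n,
          next m ((PnM n).obs l) a * (PnM n).δ l a l' *
            qsafe u next N (u m ((PnM n).obs l) a) l'
        ≤ 1 * ∑ a : PnAction n, ∑ l' : PnState n,
            next m ((PnM n).obs l) a * ((PnM n).δ l a l' * 1) := by
          refine mul_le_mul' (by split <;> simp) ?_
          refine Finset.sum_le_sum (fun a _ => Finset.sum_le_sum (fun l' _ => ?_))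
          rw [mul_assoc]
          exact mul_le_mul' le_rfl (mul_le_mul' le_rfl (ih _ _))
      _ = 1 := by
          rw [one_mul]
          have : ∀ a : PnAction n, ∑ l' : PnState n,
              next m ((PnM n).obs l) a * ((PnM n).δ l a l' * 1)
              = next m ((PnM n).obs l) a := by
            intro a
            simp only [mul_one]
            rw [← Finset.mul_sum, sum_pmf_eq_one, mul_one]
          rw [Finset.sum_congr rfl (fun a _ => this a), sum_pmf_eq_one]

lemma qsafe_succ_le (N : ℕ) (m : Mem) (l : PnState n) :
    qsafe u next (N+1) m l ≤ qsafe u next N m l := by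
  induction N generalizing m l with
  | zero =>
    rw [qsafe_succ, qsafe_zero]
    split
    · simp
    · rw [one_mul]
      calc ∑ a : PnAction n, ∑ l' : PnState n,
          next m ((PnM n).obs l) a * (PnM n).δ l a l' *
            qsafe u next 0 (u m ((PnM n).obs l) a) l'
          ≤ ∑ a : PnAction n, ∑ l' : PnState n,
            next m ((PnM n).obs l) a * ((PnM n).δ l a l' * 1) := by
            refine Finset.sum_le_sum (fun a _ => Finset.sum_le_sum (fun l' _ => ?_))
            rw [mul_assoc]
            exact mul_le_mul' le_rfl (mul_le_mul' le_rfl (qsafe_le_one _ _ _ _ _))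
        _ = 1 := by
            have : ∀ a : PnAction n, ∑ l' : PnState n,
                next m ((PnM n).obs l) a * ((PnM n).δ l a l' * 1)
                = next m ((PnM n).obs l) a := by
              intro a
              simp only [mul_one]
              rw [← Finset.mul_sum, sum_pmf_eq_one, mul_one]
            rw [Finset.sum_congr rfl (fun a _ => this a), sum_pmf_eq_one]
  | succ N ih =>
    rw [qsafe_succ, qsafe_succ]
    refine mul_le_mul' le_rfl ?_
    refine Finset.sum_le_sum (fun a _ => Finset.sum_le_sum (fun l' _ => ?_))
    exact mul_le_mul' le_rfl (ih _ _)

lemma qsafe_antitone (m : Mem) (l : PnState n) :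
    Antitone (fun N => qsafe u next N m l) :=
  antitone_nat_of_succ_le (fun N => qsafe_succ_le u next N m l)

end Chain
section Extract

variable {n : ℕ} [NeZero n] {Mem : Type} [Fintype Mem]
variable (u : Mem → Fin 3 → PnAction n → Mem) (next : Mem → Fin 3 → PMF (PnAction n))

/-- Limit safety value. -/
noncomputable def qinf (m : Mem) (l : PnState n) : ℝ≥0∞ := ⨅ N, qsafe u next N m l

lemma qinf_le_qsafe (N : ℕ) (m : Mem) (l : PnState n) :
    qinf u next m l ≤ qsafe u next N m l := iInf_le _ _

lemma qinf_le_one (m : Mem) (l : PnState n) : qinf u next m l ≤ 1 :=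
  le_trans (qinf_le_qsafe u next 0 m l) (qsafe_le_one u next 0 m l)

lemma qinf_bad (m : Mem) : qinf u next m (Sum.inr 1) = 0 := by
  refine le_antisymm (le_trans (qinf_le_qsafe u next 0 m _) ?_) (zero_le)
  rw [qsafe_zero, if_pos rfl]

lemma sum_weights (m : Mem) (l : PnState n) :
    ∑ a : PnAction n, ∑ l' : PnState n,
      next m ((PnM n).obs l) a * (PnM n).δ l a l' = 1 := by
  have h : ∀ a : PnAction n, ∑ l' : PnState n,
      next m ((PnM n).obs l) a * (PnM n).δ l a l' = next m ((PnM n).obs l) a := by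
    intro a; rw [← Finset.mul_sum, sum_pmf_eq_one, mul_one]
  rw [Finset.sum_congr rfl (fun a _ => h a), sum_pmf_eq_one]

/-- One step of the finite Markov chain obtained by playing the finite-memory
strategy in `PnM n`. -/
def MStep (s t : Mem × PnState n) : Prop :=
  ∃ a : PnAction n, next s.1 ((PnM n).obs s.2) a ≠ 0 ∧
    (PnM n).δ s.2 a t.2 ≠ 0 ∧ t.1 = u s.1 ((PnM n).obs s.2) a

set_option maxHeartbeats 1000000 in
lemma qinf_le_step (m : Mem) (l : PnState n) (hl : ¬ l = Sum.inr 1) :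
    qinf u next m l ≤ ∑ a : PnAction n, ∑ l' : PnState n,
      next m ((PnM n).obs l) a * (PnM n).δ l a l' *
        qinf u next (u m ((PnM n).obs l) a) l' := by
  refine ENNReal.le_of_forall_pos_le_add (fun ε hε _ => ?_)
  classical
  -- a uniform horizon approximating `qinf` within `ε`
  have hone : ∀ s : Mem × PnState n, ∃ N : ℕ,
      qsafe u next N s.1 s.2 ≤ qinf u next s.1 s.2 + ε := by
    intro s
    have hlt : qinf u next s.1 s.2 < qinf u next s.1 s.2 + ε :=
      ENNReal.lt_add_right (ne_top_of_le_ne_top ENNReal.one_ne_top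
        (qinf_le_one u next s.1 s.2)) (by exact_mod_cast hε.ne')
    have := iInf_lt_iff.mp hlt
    obtain ⟨N, hN⟩ := this
    exact ⟨N, hN.le⟩
  choose N0 hN0 using hone
  set N := Finset.univ.sup N0 with hNdef
  have hNle : ∀ s : Mem × PnState n, qsafe u next N s.1 s.2 ≤ qinf u next s.1 s.2 + ε := by
    intro s
    exact le_trans (qsafe_antitone u next s.1 s.2 (Finset.le_sup (Finset.mem_univ s))) (hN0 s)
  calc qinf u next m l ≤ qsafe u next (N+1) m l := qinf_le_qsafe u next _ m l
    _ = ∑ a : PnAction n, ∑ l' : PnState n,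
          next m ((PnM n).obs l) a * (PnM n).δ l a l' *
            qsafe u next N (u m ((PnM n).obs l) a) l' := by
        rw [qsafe_succ, if_neg hl, one_mul]
    _ ≤ ∑ a : PnAction n, ∑ l' : PnState n,
          next m ((PnM n).obs l) a * (PnM n).δ l a l' *
            (qinf u next (u m ((PnM n).obs l) a) l' + ε) := by
        refine Finset.sum_le_sum (fun a _ => Finset.sum_le_sum (fun l' _ => ?_))
        exact mul_le_mul' le_rfl (hNle (u m ((PnM n).obs l) a, l'))
    _ = (∑ a : PnAction n, ∑ l' : PnState n,
          next m ((PnM n).obs l) a * (PnM n).δ l a l' *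
            qinf u next (u m ((PnM n).obs l) a) l')
        + (∑ a : PnAction n, ∑ l' : PnState n,
            next m ((PnM n).obs l) a * (PnM n).δ l a l') * ε := by
        rw [Finset.sum_mul, ← Finset.sum_add_distrib]
        refine Finset.sum_congr rfl (fun a _ => ?_)
        rw [Finset.sum_mul, ← Finset.sum_add_distrib]
        refine Finset.sum_congr rfl (fun l' _ => ?_)
        rw [mul_add]
    _ = (∑ a : PnAction n, ∑ l' : PnState n,
          next m ((PnM n).obs l) a * (PnM n).δ l a l' *
            qinf u next (u m ((PnM n).obs l) a) l') + ε := by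
        rw [sum_weights, one_mul]

set_option maxHeartbeats 2000000 in
lemma exists_unreach (m0 : Mem) (h : 0 < qinf u next m0 (Sum.inr 0)) :
    ∃ s : Mem × PnState n,
      Relation.ReflTransGen (MStep u next) (m0, (Sum.inr 0 : PnState n)) s ∧
      ∀ t, Relation.ReflTransGen (MStep u next) s t → 0 < qinf u next t.1 t.2 := by
  classical
  set s0 : Mem × PnState n := (m0, Sum.inr 0) with hs0
  set V : Finset (Mem × PnState n) :=
    Finset.univ.filter (fun s => Relation.ReflTransGen (MStep u next) s0 s) with hV
  have hs0V : s0 ∈ V := by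
    rw [hV, Finset.mem_filter]; exact ⟨Finset.mem_univ _, Relation.ReflTransGen.refl⟩
  obtain ⟨sm, hsmV, hmax⟩ := Finset.exists_max_image V (fun s => qinf u next s.1 s.2) ⟨s0, hs0V⟩
  have hMx : 0 < qinf u next sm.1 sm.2 := lt_of_lt_of_le h (hmax s0 hs0V)
  -- one-step preservation of the maximum
  have hstep : ∀ s, s ∈ V → qinf u next s.1 s.2 = qinf u next sm.1 sm.2 →
      ∀ t, MStep u next s t → t ∈ V ∧ qinf u next t.1 t.2 = qinf u next sm.1 sm.2 := by
    intro s hsV hs t ht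
    have htV : t ∈ V := by
      rw [hV, Finset.mem_filter]
      refine ⟨Finset.mem_univ _, Relation.ReflTransGen.tail ?_ ht⟩
      rw [hV, Finset.mem_filter] at hsV
      exact hsV.2
    refine ⟨htV, ?_⟩
    by_contra hne
    have htlt : qinf u next t.1 t.2 < qinf u next sm.1 sm.2 :=
      lt_of_le_of_ne (hmax t htV) hne
    set Mx := qinf u next sm.1 sm.2 with hMxdef
    have hsnb : ¬ s.2 = Sum.inr 1 := by
      intro hbad
      rw [← hs, show s.2 = Sum.inr 1 from hbad, qinf_bad] at hMx
      exact lt_irrefl _ hMx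
    -- the flattened one-step inequality
    obtain ⟨a0, ha0, hd0, ht1⟩ := ht
    have hle := qinf_le_step u next s.1 s.2 hsnb
    rw [hs] at hle
    -- flatten double sum to a sum over pairs
    set c : PnAction n × PnState n → ℝ≥0∞ :=
      fun x => next s.1 ((PnM n).obs s.2) x.1 * (PnM n).δ s.2 x.1 x.2 with hc
    set q : PnAction n × PnState n → ℝ≥0∞ :=
      fun x => qinf u next (u s.1 ((PnM n).obs s.2) x.1) x.2 with hq
    have hflat : ∑ a : PnAction n, ∑ l' : PnState n,
        next s.1 ((PnM n).obs s.2) a * (PnM n).δ s.2 a l' *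
          qinf u next (u s.1 ((PnM n).obs s.2) a) l'
        = ∑ x : PnAction n × PnState n, c x * q x := by
      rw [Fintype.sum_prod_type]
    have hcsum : ∑ x : PnAction n × PnState n, c x = 1 := by
      rw [Fintype.sum_prod_type]; exact sum_weights next s.1 s.2
    rw [hflat] at hle
    -- every positively-weighted successor is in `V`
    have hqle : ∀ x : PnAction n × PnState n, c x ≠ 0 → q x ≤ Mx := by
      intro x hx
      have hnz1 : next s.1 ((PnM n).obs s.2) x.1 ≠ 0 := by
        intro h0; rw [hc] at hx; apply hx; simp [h0]
      have hnz2 : (PnM n).δ s.2 x.1 x.2 ≠ 0 := by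
        intro h0; rw [hc] at hx; apply hx; simp [h0]
      have hxV : (u s.1 ((PnM n).obs s.2) x.1, x.2) ∈ V := by
        rw [hV, Finset.mem_filter]
        refine ⟨Finset.mem_univ _, Relation.ReflTransGen.tail ?_ ⟨x.1, hnz1, hnz2, rfl⟩⟩
        rw [hV, Finset.mem_filter] at hsV
        exact hsV.2
      exact hmax _ hxV
    -- the distinguished pair
    set x0 : PnAction n × PnState n := (a0, t.2) with hx0
    have hc0 : c x0 ≠ 0 := by
      rw [hc]; simp only [hx0]
      exact mul_ne_zero ha0 hd0
    have hc0top : c x0 ≠ ⊤ := by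
      rw [hc]
      exact ENNReal.mul_ne_top (PMF.apply_ne_top _ _) (PMF.apply_ne_top _ _)
    have hq0 : q x0 < Mx := by
      rw [hq]; simp only [hx0]
      rw [← ht1]; exact htlt
    -- strict inequality
    have hsum1 : ∑ x : PnAction n × PnState n, c x * q x
        = c x0 * q x0 + ∑ x ∈ Finset.univ.erase x0, c x * q x :=
      (Finset.add_sum_erase _ _ (Finset.mem_univ x0)).symm
    have hsum2 : c x0 * Mx + ∑ x ∈ Finset.univ.erase x0, c x * Mx
        = ∑ x : PnAction n × PnState n, c x * Mx :=
      Finset.add_sum_erase _ (fun x => c x * Mx) (Finset.mem_univ x0)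
    have hMxtop : Mx ≠ ⊤ := ne_top_of_le_ne_top ENNReal.one_ne_top (qinf_le_one u next _ _)
    have herasetop : ∑ x ∈ Finset.univ.erase x0, c x * Mx ≠ ⊤ := by
      refine ne_top_of_le_ne_top ?_ (le_trans (Finset.sum_le_sum_of_subset
        (Finset.erase_subset _ _)) le_rfl)
      rw [← Finset.sum_mul, hcsum, one_mul]
      exact hMxtop
    have htermle : ∀ x ∈ Finset.univ.erase x0, c x * q x ≤ c x * Mx := by
      intro x _
      by_cases hx : c x = 0
      · rw [hx, zero_mul, zero_mul]
      · exact mul_le_mul' le_rfl (hqle x hx)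
    have herase_le : ∑ x ∈ Finset.univ.erase x0, c x * q x
        ≤ ∑ x ∈ Finset.univ.erase x0, c x * Mx := Finset.sum_le_sum htermle
    have herasetop' : ∑ x ∈ Finset.univ.erase x0, c x * q x ≠ ⊤ :=
      ne_top_of_le_ne_top herasetop herase_le
    have hlt2 : ∑ x : PnAction n × PnState n, c x * q x
        < ∑ x : PnAction n × PnState n, c x * Mx := by
      rw [hsum1, ← hsum2]
      exact ENNReal.add_lt_add_of_lt_of_le herasetop'
        (ENNReal.mul_lt_mul_right hc0 hc0top hq0) herase_le
    rw [← Finset.sum_mul, hcsum, one_mul] at hlt2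
    exact absurd hle (not_le.mpr hlt2)
  -- propagate along reachability
  have hkey : ∀ t, Relation.ReflTransGen (MStep u next) sm t →
      t ∈ V ∧ qinf u next t.1 t.2 = qinf u next sm.1 sm.2 := by
    intro t hreach
    induction hreach with
    | refl => exact ⟨hsmV, rfl⟩
    | tail hab hbc ih => exact hstep _ ih.1 ih.2 _ hbc
  refine ⟨sm, ?_, fun t ht => ?_⟩
  · rw [hV, Finset.mem_filter] at hsmV; exact hsmV.2
  · rw [(hkey t ht).2]; exact hMx

end Extract
section Comb

variable {n : ℕ} [NeZero n] {Mem : Type}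
variable (u : Mem → Fin 3 → PnAction n → Mem) (next : Mem → Fin 3 → PMF (PnAction n))

lemma obs_q0 : (PnM n).obs (Sum.inr 0) = 0 := rfl

lemma obs_loop (x : Σ i : Fin n, Fin (Nat.nth Nat.Prime i.val)) :
    (PnM n).obs (Sum.inl x) = 1 := rfl

lemma delta_q0_some (σ : Fin n) :
    (PnM n).δ (Sum.inr 0) (some σ)
      = (PMF.uniformOfFintype (Fin n)).map
          (fun i => Sum.inl ⟨i, ⟨0, (Nat.prime_nth_prime i.val).pos⟩⟩) := rfl

lemma delta_q0_none :
    (PnM n).δ (Sum.inr 0) (none : PnAction n) = PMF.pure (Sum.inr 1) := rfl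

lemma delta_loop (i : Fin n) (j : Fin (Nat.nth Nat.Prime i.val)) (act : PnAction n) :
    (PnM n).δ (Sum.inl ⟨i, j⟩) act =
      if hlt : j.val + 1 < Nat.nth Nat.Prime i.val then
        (match act with
         | some _ => POMDP.half (Sum.inl ⟨i, ⟨j.val + 1, hlt⟩⟩) (Sum.inr 0)
         | none => PMF.pure (Sum.inr 1))
      else
        (match act with
         | some k =>
             if k = i then PMF.pure (Sum.inr 1)
             else POMDP.half (Sum.inl ⟨i, ⟨0, (Nat.prime_nth_prime i.val).pos⟩⟩)
                    (Sum.inr 0)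
         | none => PMF.pure (Sum.inr 0)) := rfl

lemma pure_ne_zero_iff {L : Type} (a z : L) : (PMF.pure a) z ≠ 0 ↔ z = a := by
  rw [← PMF.mem_support_iff, PMF.support_pure, Set.mem_singleton_iff]

lemma half_ne_zero_iff {L : Type} (x y z : L) :
    (POMDP.half x y) z ≠ 0 ↔ z = x ∨ z = y := by
  rw [← PMF.mem_support_iff, POMDP.half, PMF.support_map, PMF.support_uniformOfFintype]
  constructor
  · rintro ⟨b, -, rfl⟩
    cases b
    · right; rfl
    · left; rfl
  · rintro (rfl | rfl)
    · exact ⟨true, trivial, rfl⟩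
    · exact ⟨false, trivial, rfl⟩

lemma q0_step_ne_zero (σ i : Fin n) :
    (PnM n).δ (Sum.inr 0) (some σ)
      (Sum.inl ⟨i, ⟨0, (Nat.prime_nth_prime i.val).pos⟩⟩) ≠ 0 := by
  rw [delta_q0_some, ← PMF.mem_support_iff, PMF.support_map,
    PMF.support_uniformOfFintype]
  exact ⟨i, trivial, rfl⟩

/-- No play consistent with the chain from `s` ever reaches `Bad`. -/
def BadUnreach (s : Mem × PnState n) : Prop :=
  ∀ t, Relation.ReflTransGen (MStep u next) s t → t.2 ≠ Sum.inr 1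

lemma bu_self {s : Mem × PnState n} (h : BadUnreach u next s) :
    s.2 ≠ Sum.inr 1 := h s Relation.ReflTransGen.refl

lemma bu_step {s t : Mem × PnState n} (h : BadUnreach u next s)
    (hst : MStep u next s t) : BadUnreach u next t :=
  fun r hr => h r (Relation.ReflTransGen.head hst hr)

/-- From a Bad-unreachable state one can reach a Bad-unreachable state at `q_0`. -/
lemma reach_q0 (s : Mem × PnState n) (hs : BadUnreach u next s) :
    ∃ m : Mem, BadUnreach u next (m, Sum.inr 0) := by
  obtain ⟨m, l⟩ := s
  match l with
  | Sum.inr k =>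
      have hk : k ≠ 1 := by
        intro hk1
        exact bu_self u next hs (by rw [hk1])
      have hk0 : k = 0 := by omega
      subst hk0
      exact ⟨m, hs⟩
  | Sum.inl ⟨i, j⟩ =>
      obtain ⟨a, ha⟩ := PMF.support_nonempty (next m ((PnM n).obs (Sum.inl ⟨i, j⟩)))
      rw [PMF.mem_support_iff] at ha
      have hstep : ∀ l' : PnState n, (PnM n).δ (Sum.inl ⟨i, j⟩) a l' ≠ 0 →
          BadUnreach u next (u m ((PnM n).obs (Sum.inl ⟨i, j⟩)) a, l') := by
        intro l' hd
        exact bu_step u next hs ⟨a, ha, hd, rfl⟩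
      by_cases hlt : j.val + 1 < Nat.nth Nat.Prime i.val
      · match a, ha with
        | none, ha =>
            exfalso
            have hd : (PnM n).δ (Sum.inl ⟨i, j⟩) none (Sum.inr 1) ≠ 0 := by
              rw [delta_loop, dif_pos hlt]
              exact (pure_ne_zero_iff _ _).mpr rfl
            exact bu_self u next (hstep _ hd) rfl
        | some σ, ha =>
            refine ⟨u m ((PnM n).obs (Sum.inl ⟨i, j⟩)) (some σ), hstep _ ?_⟩
            rw [delta_loop, dif_pos hlt]
            exact (half_ne_zero_iff _ _ _).mpr (Or.inr rfl)
      · match a, ha with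
        | none, ha =>
            refine ⟨u m ((PnM n).obs (Sum.inl ⟨i, j⟩)) none, hstep _ ?_⟩
            rw [delta_loop, dif_neg hlt]
            exact (pure_ne_zero_iff _ _).mpr rfl
        | some σ, ha =>
            by_cases hσ : σ = i
            · exfalso
              have hd : (PnM n).δ (Sum.inl ⟨i, j⟩) (some σ) (Sum.inr 1) ≠ 0 := by
                rw [delta_loop, dif_neg hlt]
                simp only [hσ, if_pos rfl]
                exact (pure_ne_zero_iff _ _).mpr rfl
              exact bu_self u next (hstep _ hd) rfl
            · refine ⟨u m ((PnM n).obs (Sum.inl ⟨i, j⟩)) (some σ), hstep _ ?_⟩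
              rw [delta_loop, dif_neg hlt]
              simp only [if_neg hσ]
              exact (half_ne_zero_iff _ _ _).mpr (Or.inr rfl)

/-- From a Bad-unreachable state at `q_0`, one common memory works for all loops. -/
lemma enter_loops (m : Mem) (hm : BadUnreach u next (m, Sum.inr 0)) :
    ∃ m1 : Mem, ∀ i : Fin n,
      BadUnreach u next (m1, Sum.inl ⟨i, ⟨0, (Nat.prime_nth_prime i.val).pos⟩⟩) := by
  obtain ⟨a, ha⟩ := PMF.support_nonempty (next m ((PnM n).obs (Sum.inr 0)))
  rw [PMF.mem_support_iff] at ha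
  match a, ha with
  | none, ha =>
      exfalso
      have hd : (PnM n).δ (Sum.inr 0) none (Sum.inr 1) ≠ 0 := by
        rw [delta_q0_none]
        exact (pure_ne_zero_iff _ _).mpr rfl
      exact bu_self u next (bu_step u next (t := (_, Sum.inr 1)) hm ⟨none, ha, hd, rfl⟩) rfl
  | some σ, ha =>
      refine ⟨u m ((PnM n).obs (Sum.inr 0)) (some σ), fun i => ?_⟩
      exact bu_step u next hm ⟨some σ, ha, q0_step_ne_zero σ i, rfl⟩

/-- The action selected by the strategy in memory `m` upon observation `o_2`. -/
noncomputable def sel (m : Mem) : PnAction n :=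
  (PMF.support_nonempty (next m 1)).some

lemma sel_ne_zero (m : Mem) : next m 1 (sel next m) ≠ 0 := by
  rw [← PMF.mem_support_iff]
  exact (PMF.support_nonempty (next m 1)).some_mem

/-- The deterministic memory sequence obtained by always selecting `sel`. -/
noncomputable def mseq (m1 : Mem) : ℕ → Mem
  | 0 => m1
  | (k+1) => u (mseq m1 k) 1 (sel next (mseq m1 k))

lemma mseq_succ (m1 : Mem) (k : ℕ) :
    mseq u next m1 (k+1) = u (mseq u next m1 k) 1 (sel next (mseq u next m1 k)) := rfl

/-- At step `k` (staying inside the loops), all loop states with index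
`k mod p_i` are simultaneously Bad-unreachable. -/
def GoodAt (m : Mem) (k : ℕ) : Prop :=
  ∀ i : Fin n, BadUnreach u next (m, Sum.inl
    ⟨i, ⟨k % Nat.nth Nat.Prime i.val, Nat.mod_lt _ (Nat.prime_nth_prime i.val).pos⟩⟩)

/-- If not all loops are at the top, the strategy cannot play `#`. -/
lemma none_zero_of_nontop (m : Mem) (k : ℕ) (hk : k < pstar n - 1)
    (hg : GoodAt u next m k) : next m 1 none = 0 := by
  by_contra hne
  obtain ⟨i, hi⟩ := exists_nontop hk
  have hlt : k % Nat.nth Nat.Prime i.val + 1 < Nat.nth Nat.Prime i.val := by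
    have := Nat.mod_lt k (Nat.prime_nth_prime i.val).pos
    omega
  have hd : (PnM n).δ (Sum.inl ⟨i, ⟨k % Nat.nth Nat.Prime i.val,
      Nat.mod_lt _ (Nat.prime_nth_prime i.val).pos⟩⟩) none (Sum.inr 1) ≠ 0 := by
    rw [delta_loop, dif_pos hlt]
    exact (pure_ne_zero_iff _ _).mpr rfl
  exact bu_self u next (bu_step u next (t := (_, Sum.inr 1)) (hg i) ⟨none, hne, hd, rfl⟩) rfl

/-- If all loops are at the top, the strategy must play `#`. -/
lemma none_ne_zero_of_top (m : Mem) (hg : GoodAt u next m (pstar n - 1)) :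
    next m 1 none ≠ 0 := by
  obtain ⟨a, ha⟩ := PMF.support_nonempty (next m 1)
  rw [PMF.mem_support_iff] at ha
  match a, ha with
  | none, ha => exact ha
  | some σ, ha =>
      exfalso
      have htop : (pstar n - 1) % Nat.nth Nat.Prime σ.val
          = Nat.nth Nat.Prime σ.val - 1 := pstar_sub_one_mod σ
      have hnlt : ¬ ((pstar n - 1) % Nat.nth Nat.Prime σ.val + 1
          < Nat.nth Nat.Prime σ.val) := by
        have := two_le_nth_prime σ.val
        omega
      have hd : (PnM n).δ (Sum.inl ⟨σ, ⟨(pstar n - 1) % Nat.nth Nat.Prime σ.val,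
          Nat.mod_lt _ (Nat.prime_nth_prime σ.val).pos⟩⟩) (some σ) (Sum.inr 1) ≠ 0 := by
        rw [delta_loop, dif_neg hnlt]
        simp only [if_pos rfl]
        exact (pure_ne_zero_iff _ _).mpr rfl
      exact bu_self u next (bu_step u next (t := (_, Sum.inr 1)) (hg σ) ⟨some σ, ha, hd, rfl⟩) rfl

/-- The invariant is maintained along `mseq` while inside the loops. -/
lemma good_invariant (m1 : Mem)
    (h0 : GoodAt u next m1 0) :
    ∀ k, k ≤ pstar n - 1 → GoodAt u next (mseq u next m1 k) k := by
  intro k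
  induction k with
  | zero => intro _; exact h0
  | succ k ih =>
      intro hk1
      have hk : k < pstar n - 1 := by omega
      have hg := ih (by omega)
      have hnone : sel next (mseq u next m1 k) ≠ none := by
        intro hn
        have := none_zero_of_nontop u next _ k hk hg
        exact sel_ne_zero next (mseq u next m1 k) (hn ▸ this)
      obtain ⟨σ, hσ⟩ : ∃ σ : Fin n, sel next (mseq u next m1 k) = some σ := by
        cases hsel : sel next (mseq u next m1 k) with
        | none => exact absurd hsel hnone
        | some σ => exact ⟨σ, rfl⟩
      intro i
      show BadUnreach u next (u (mseq u next m1 k) 1 (sel next (mseq u next m1 k)),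
        Sum.inl ⟨i, ⟨(k+1) % Nat.nth Nat.Prime i.val,
          Nat.mod_lt _ (Nat.prime_nth_prime i.val).pos⟩⟩)
      have hne := sel_ne_zero next (mseq u next m1 k)
      by_cases hlt : k % Nat.nth Nat.Prime i.val + 1 < Nat.nth Nat.Prime i.val
      · have hmod : (k+1) % Nat.nth Nat.Prime i.val
            = k % Nat.nth Nat.Prime i.val + 1 := by
          conv_lhs => rw [Nat.add_mod]
          have h2 := two_le_nth_prime i.val
          rw [Nat.mod_eq_of_lt (a := 1) (by omega), Nat.mod_eq_of_lt hlt]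
        have hd : (PnM n).δ (Sum.inl ⟨i, ⟨k % Nat.nth Nat.Prime i.val,
            Nat.mod_lt _ (Nat.prime_nth_prime i.val).pos⟩⟩)
            (sel next (mseq u next m1 k))
            (Sum.inl ⟨i, ⟨(k+1) % Nat.nth Nat.Prime i.val,
              Nat.mod_lt _ (Nat.prime_nth_prime i.val).pos⟩⟩) ≠ 0 := by
          simp only [hmod]
          rw [hσ, delta_loop, dif_pos hlt]
          exact (half_ne_zero_iff _ _ _).mpr (Or.inl rfl)
        exact bu_step u next (hg i) ⟨sel next (mseq u next m1 k), hne, hd, rfl⟩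
      · have htop : k % Nat.nth Nat.Prime i.val = Nat.nth Nat.Prime i.val - 1 := by
          have := Nat.mod_lt k (Nat.prime_nth_prime i.val).pos
          omega
        have hσi : σ ≠ i := by
          intro hσi
          have hd : (PnM n).δ (Sum.inl ⟨i, ⟨k % Nat.nth Nat.Prime i.val,
              Nat.mod_lt _ (Nat.prime_nth_prime i.val).pos⟩⟩)
              (sel next (mseq u next m1 k)) (Sum.inr 1) ≠ 0 := by
            rw [hσ, delta_loop, dif_neg hlt, hσi]
            simp only [if_pos rfl]
            exact (pure_ne_zero_iff _ _).mpr rfl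
          exact bu_self u next (bu_step u next (t := (_, Sum.inr 1)) (hg i) ⟨sel next (mseq u next m1 k), hne, hd, rfl⟩) rfl
        have hmod : (k+1) % Nat.nth Nat.Prime i.val = 0 := by
          have h2 := two_le_nth_prime i.val
          conv_lhs => rw [Nat.add_mod]
          rw [Nat.mod_eq_of_lt (a := 1) (by omega), htop]
          have : Nat.nth Nat.Prime i.val - 1 + 1 = Nat.nth Nat.Prime i.val := by omega
          rw [this, Nat.mod_self]
        have hd : (PnM n).δ (Sum.inl ⟨i, ⟨k % Nat.nth Nat.Prime i.val,
            Nat.mod_lt _ (Nat.prime_nth_prime i.val).pos⟩⟩)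
            (sel next (mseq u next m1 k))
            (Sum.inl ⟨i, ⟨(k+1) % Nat.nth Nat.Prime i.val,
              Nat.mod_lt _ (Nat.prime_nth_prime i.val).pos⟩⟩) ≠ 0 := by
          simp only [hmod]
          rw [hσ, delta_loop, dif_neg hlt]
          simp only [if_neg hσi]
          exact (half_ne_zero_iff _ _ _).mpr (Or.inl rfl)
        exact bu_step u next (hg i) ⟨sel next (mseq u next m1 k), hne, hd, rfl⟩

end Comb

/-- For every `n ≥ 1`, in the POMDP `P_n` with the safety
objective `Safe(L ∖ {Bad})`, every finite-memory randomized (observation-based)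
strategy that is positive winning from `q_0` has memory of size at least
`p*_n = p_1 ⋯ p_n`; in particular `p*_n ≥ 2^n`, while `P_n` has
`2 + (p_1 + ⋯ + p_n)` states. -/
theorem pn_positive_safe_memory_lower_bound (n : ℕ) [NeZero n] :
    (∀ (Mem : Type) (iM : Fintype Mem) (m0 : Mem)
        (u : Mem → Fin 3 → PnAction n → Mem)
        (next : Mem → Fin 3 → PMF (PnAction n)),
        0 < (PnM n).safeProb ((PnM n).fmStrategy u next m0)
              (Sum.inr 0) {(Sum.inr 1 : PnState n)}ᶜ →
        pstar n ≤ @Fintype.card Mem iM) ∧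
    2 ^ n ≤ pstar n ∧
    Fintype.card (PnState n) = 2 + ∑ i : Fin n, Nat.nth Nat.Prime i.val := by
  refine ⟨?_, two_pow_le_pstar n, card_PnState n⟩
  intro Mem iM m0 u next hpos
  letI := iM
  by_contra hcard
  push_neg at hcard
  have hq : 0 < qinf u next m0 (Sum.inr 0) := hpos
  obtain ⟨sstar, -, hstar⟩ := exists_unreach u next m0 hq
  have hBU : BadUnreach u next sstar := by
    intro t ht hbad
    have hpos' := hstar t ht
    rw [hbad, qinf_bad] at hpos'
    exact lt_irrefl _ hpos'
  obtain ⟨mq, hmq⟩ := reach_q0 u next sstar hBU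
  obtain ⟨m1, hm1⟩ := enter_loops u next mq hmq
  have h0 : GoodAt u next m1 0 := by
    intro i
    have e : (Sum.inl ⟨i, ⟨0 % Nat.nth Nat.Prime i.val,
        Nat.mod_lt _ (Nat.prime_nth_prime i.val).pos⟩⟩ : PnState n)
        = Sum.inl ⟨i, ⟨0, (Nat.prime_nth_prime i.val).pos⟩⟩ := by
      simp
    rw [e]
    exact hm1 i
  have hgood := good_invariant u next m1 h0
  have hps := pstar_pos n
  obtain ⟨k, k', hkk', hFeq⟩ := Fintype.exists_ne_map_eq_of_card_lt
    (fun k : Fin (pstar n) => mseq u next m1 k.val) (by rwa [Fintype.card_fin])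
  have main : ∀ K K' : ℕ, K < K' → K' ≤ pstar n - 1 →
      mseq u next m1 K = mseq u next m1 K' → False := by
    intro K K' hKK' hK' heq0
    set d := pstar n - 1 - K' with hd
    have heq : ∀ j : ℕ, mseq u next m1 (K + j) = mseq u next m1 (K' + j) := by
      intro j
      induction j with
      | zero => simpa using heq0
      | succ j ih =>
          show mseq u next m1 (K + j + 1) = mseq u next m1 (K' + j + 1)
          rw [mseq_succ, mseq_succ, ih]
    have hKd : K + d < pstar n - 1 := by omega
    have hK'd : K' + d = pstar n - 1 := by omega
    have hzero := none_zero_of_nontop u next (mseq u next m1 (K + d)) (K + d) hKd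
      (hgood (K + d) (by omega))
    have hne := none_ne_zero_of_top u next (mseq u next m1 (pstar n - 1))
      (hgood (pstar n - 1) le_rfl)
    rw [← hK'd, ← heq d] at hne
    exact hne hzero
  rcases lt_or_gt_of_ne hkk' with h | h
  · have hk' : k'.val ≤ pstar n - 1 := by have := k'.isLt; omega
    exact main k.val k'.val h hk' hFeq
  · have hk : k.val ≤ pstar n - 1 := by have := k.isLt; omega
    exact main k'.val k.val h hk hFeq.symm
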